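/- Let M be a right-angled Coxeter matrix on a type B with Coxeter group W(M). If some four indices i, j, k, l ∈ B form an induced 4-cycle in M, then W(M) contains a subgroup isomorphic to ℤ × ℤ (generated by the commuting infinite-order elements t_i t_k and t_j t_l). -/

import Mathlib

/-- A Coxeter matrix is *right-angled* if every off-diagonal entry is `0` (meaning `∞`, no
relation imposed) or `2`. -/
def CoxeterMatrix.IsRightAngled {B : Type*} (M : CoxeterMatrix B) : Prop :=
  ∀ i j : B, i ≠ j → M i j = 0 ∨ M i j = 2

/-- Four indices `i, j, k, l` form an *induced 4-cycle* in the Coxeter matrix `M` if they are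
pairwise distinct, cyclically consecutive ones commute (`M i j = M j k = M k l = M l i = 2`)
and the two opposite pairs satisfy no relation (`M i k = 0` and `M j l = 0`). -/
def CoxeterMatrix.InducedFourCycle {B : Type*} (M : CoxeterMatrix B) (i j k l : B) : Prop :=
  (i ≠ j ∧ i ≠ k ∧ i ≠ l ∧ j ≠ k ∧ j ≠ l ∧ k ≠ l) ∧
  M i j = 2 ∧ M j k = 2 ∧ M k l = 2 ∧ M l i = 2 ∧ M i k = 0 ∧ M j l = 0

set_option maxHeartbeats 1000000 in
open DihedralGroup in
/-- If some four indices `i, j, k, l` form an induced 4-cycle in a right-angled Coxeter matrix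
`M`, then the Coxeter group of `M` contains a subgroup isomorphic to `ℤ × ℤ`, namely the one
generated by the commuting infinite-order elements `t_i t_k` and `t_j t_l`. -/
theorem stmt10 {B : Type*} (M : CoxeterMatrix B) (hra : M.IsRightAngled) (i j k l : B)
    (hcyc : M.InducedFourCycle i j k l) :
    Commute (M.simple i * M.simple k) (M.simple j * M.simple l) ∧
    ¬ IsOfFinOrder (M.simple i * M.simple k) ∧ ¬ IsOfFinOrder (M.simple j * M.simple l) ∧
    Nonempty ((Subgroup.closure {M.simple i * M.simple k, M.simple j * M.simple l} :
      Subgroup M.Group) ≃* Multiplicative (ℤ × ℤ)) := by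
  classical
  obtain ⟨⟨hij, hik, hil, hjk, hjl, hkl⟩, h2ij, h2jk, h2kl, h2li, h0ik, h0jl⟩ := hcyc
  set cs := M.toCoxeterSystem with hcs
  have hsmp : ∀ p : B, cs.simple p = M.simple p := fun p => rfl
  -- commuting simple reflections
  have hcomm : ∀ p q : B, M p q = 2 → Commute (M.simple p) (M.simple q) := by
    intro p q h2
    have h := cs.simple_mul_simple_pow p q
    rw [h2, hsmp, hsmp] at h
    have hinv : (M.simple p * M.simple q) = (M.simple p * M.simple q)⁻¹ := by
      rw [eq_inv_iff_mul_eq_one, ← pow_two]; exact h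
    have hp := cs.simple_mul_simple_self p
    have hq := cs.simple_mul_simple_self q
    rw [hsmp] at hp hq
    show M.simple p * M.simple q = M.simple q * M.simple p
    rw [hinv, mul_inv_rev, inv_eq_of_mul_eq_one_right hq, inv_eq_of_mul_eq_one_right hp]
  have hil2 : M i l = 2 := (M.symmetric l i) ▸ h2li
  set a := M.simple i * M.simple k with ha
  set b := M.simple j * M.simple l with hb
  have hab : Commute a b := by
    apply Commute.mul_left <;> apply Commute.mul_right
    · exact hcomm i j h2ij
    · exact hcomm i l hil2
    · exact (hcomm j k h2jk).symm
    · exact hcomm k l h2kl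
  -- the target group and the lift
  set g1 : B → DihedralGroup 0 := fun p =>
    if p = i then sr 0 else if p = k then sr 1 else 1 with hg1
  set g2 : B → DihedralGroup 0 := fun p =>
    if p = j then sr 0 else if p = l then sr 1 else 1 with hg2
  set f : B → DihedralGroup 0 × DihedralGroup 0 := fun p => (g1 p, g2 p) with hfdef
  have hg1sq : ∀ p, g1 p * g1 p = 1 := by
    intro p; simp only [hg1]; split_ifs <;> simp [sr_mul_sr]
  have hg2sq : ∀ p, g2 p * g2 p = 1 := by
    intro p; simp only [hg2]; split_ifs <;> simp [sr_mul_sr]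
  have key1 : ∀ p q : B, p ≠ q → M p q = 2 → (g1 p * g1 q) * (g1 p * g1 q) = 1 := by
    intro p q hpq h2
    by_cases hpi : p = i
    · subst hpi
      by_cases hqk : q = k
      · subst hqk; rw [h0ik] at h2; exact absurd h2 (by norm_num)
      · have hq1 : g1 q = 1 := by
          simp only [hg1]; rw [if_neg (Ne.symm hpq), if_neg hqk]
        rw [hq1, mul_one]; exact hg1sq _
    · by_cases hpk : p = k
      · subst hpk
        by_cases hqi : q = i
        · subst hqi; rw [M.symmetric, h0ik] at h2; exact absurd h2 (by norm_num)
        · have hq1 : g1 q = 1 := by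
            simp only [hg1]; rw [if_neg hqi, if_neg (Ne.symm hpq)]
          rw [hq1, mul_one]; exact hg1sq _
      · have hp1 : g1 p = 1 := by simp only [hg1]; rw [if_neg hpi, if_neg hpk]
        rw [hp1, one_mul]; exact hg1sq _
  have key2 : ∀ p q : B, p ≠ q → M p q = 2 → (g2 p * g2 q) * (g2 p * g2 q) = 1 := by
    intro p q hpq h2
    by_cases hpj : p = j
    · subst hpj
      by_cases hql : q = l
      · subst hql; rw [h0jl] at h2; exact absurd h2 (by norm_num)
      · have hq1 : g2 q = 1 := by
          simp only [hg2]; rw [if_neg (Ne.symm hpq), if_neg hql]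
        rw [hq1, mul_one]; exact hg2sq _
    · by_cases hpl : p = l
      · subst hpl
        by_cases hqj : q = j
        · subst hqj; rw [M.symmetric, h0jl] at h2; exact absurd h2 (by norm_num)
        · have hq1 : g2 q = 1 := by
            simp only [hg2]; rw [if_neg hqj, if_neg (Ne.symm hpq)]
          rw [hq1, mul_one]; exact hg2sq _
      · have hp1 : g2 p = 1 := by simp only [hg2]; rw [if_neg hpj, if_neg hpl]
        rw [hp1, one_mul]; exact hg2sq _
  have hf : M.IsLiftable f := by
    intro p q
    rcases eq_or_ne p q with rfl | hpq
    · rw [M.diagonal, pow_one, hfdef]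
      exact Prod.ext (hg1sq p) (hg2sq p)
    · rcases hra p q hpq with h0 | h2
      · rw [h0, pow_zero]
      · rw [h2, pow_two, hfdef]
        exact Prod.ext (by simpa using key1 p q hpq h2) (by simpa using key2 p q hpq h2)
  set φ : M.Group →* DihedralGroup 0 × DihedralGroup 0 := cs.lift ⟨f, hf⟩ with hφ
  have hφs : ∀ p, φ (M.simple p) = f p := by
    intro p; rw [← hsmp]; exact cs.lift_apply_simple hf p
  have hfi : f i = (sr 0, 1) := by
    simp [hfdef, hg1, hg2, hij, hik, hil, hjk, hjl, hkl,
      Ne.symm hij, Ne.symm hik, Ne.symm hil, Ne.symm hjk, Ne.symm hjl, Ne.symm hkl]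
  have hfk : f k = (sr 1, 1) := by
    simp [hfdef, hg1, hg2, hij, hik, hil, hjk, hjl, hkl,
      Ne.symm hij, Ne.symm hik, Ne.symm hil, Ne.symm hjk, Ne.symm hjl, Ne.symm hkl]
  have hfj : f j = (1, sr 0) := by
    simp [hfdef, hg1, hg2, hij, hik, hil, hjk, hjl, hkl,
      Ne.symm hij, Ne.symm hik, Ne.symm hil, Ne.symm hjk, Ne.symm hjl, Ne.symm hkl]
  have hfl : f l = (1, sr 1) := by
    simp [hfdef, hg1, hg2, hij, hik, hil, hjk, hjl, hkl,
      Ne.symm hij, Ne.symm hik, Ne.symm hil, Ne.symm hjk, Ne.symm hjl, Ne.symm hkl]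
  have hφa : φ a = (r 1, 1) := by
    rw [ha, map_mul, hφs, hφs, hfi, hfk, Prod.mk_mul_mk, sr_mul_sr, one_mul, sub_zero]
  have hφb : φ b = (1, r 1) := by
    rw [hb, map_mul, hφs, hφs, hfj, hfl, Prod.mk_mul_mk, sr_mul_sr, one_mul, sub_zero]
  have hr1 : ¬ IsOfFinOrder (r 1 : DihedralGroup 0) := by
    rw [← orderOf_eq_zero_iff]
    exact orderOf_r_one
  -- infinite order
  have hafin : ¬ IsOfFinOrder a := by
    intro h
    have h' := (MonoidHom.fst (DihedralGroup 0) (DihedralGroup 0)).isOfFinOrder (φ.isOfFinOrder h)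
    rw [hφa] at h'
    exact hr1 h'
  have hbfin : ¬ IsOfFinOrder b := by
    intro h
    have h' := (MonoidHom.snd (DihedralGroup 0) (DihedralGroup 0)).isOfFinOrder (φ.isOfFinOrder h)
    rw [hφb] at h'
    exact hr1 h'
  -- the homomorphism from ℤ × ℤ
  set ψ : Multiplicative (ℤ × ℤ) →* M.Group := MonoidHom.mk'
    (fun x => a ^ (Multiplicative.toAdd x).1 * b ^ (Multiplicative.toAdd x).2)
    (by
      intro x y
      simp only [toAdd_mul, Prod.fst_add, Prod.snd_add, zpow_add]
      rw [mul_assoc, ← mul_assoc (a ^ (Multiplicative.toAdd y).1),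
        (hab.zpow_zpow (Multiplicative.toAdd y).1 (Multiplicative.toAdd x).2).eq,
        mul_assoc, ← mul_assoc]) with hψ
  have hψ_apply : ∀ m n : ℤ, ψ (Multiplicative.ofAdd (m, n)) = a ^ m * b ^ n := fun m n => rfl
  have hψinj : Function.Injective ψ := by
    rw [injective_iff_map_eq_one]
    intro x hx
    have h1 : a ^ (Multiplicative.toAdd x).1 * b ^ (Multiplicative.toAdd x).2 = 1 := hx
    have h2 : φ (a ^ (Multiplicative.toAdd x).1 * b ^ (Multiplicative.toAdd x).2) = 1 := by
      rw [h1, map_one]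
    rw [map_mul, map_zpow, map_zpow, hφa, hφb] at h2
    have hfst : (r 1 : DihedralGroup 0) ^ (Multiplicative.toAdd x).1 *
        (1 : DihedralGroup 0) ^ (Multiplicative.toAdd x).2 = 1 := congrArg Prod.fst h2
    have hsnd : (1 : DihedralGroup 0) ^ (Multiplicative.toAdd x).1 *
        (r 1 : DihedralGroup 0) ^ (Multiplicative.toAdd x).2 = 1 := congrArg Prod.snd h2
    rw [one_zpow, mul_one] at hfst
    rw [one_zpow, one_mul] at hsnd
    have hinj := injective_zpow_iff_not_isOfFinOrder.mpr hr1
    have hm : (Multiplicative.toAdd x).1 = 0 := hinj (by simpa using hfst)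
    have hn : (Multiplicative.toAdd x).2 = 0 := hinj (by simpa using hsnd)
    have hx0 : Multiplicative.toAdd x = 0 := Prod.ext hm hn
    exact toAdd_eq_zero.mp hx0
  have hrange : ψ.range = Subgroup.closure {a, b} := by
    apply le_antisymm
    · rintro w hw
      obtain ⟨x, rfl⟩ := hw
      have hx : ψ x = a ^ (Multiplicative.toAdd x).1 * b ^ (Multiplicative.toAdd x).2 := rfl
      rw [hx]
      have hma : a ∈ Subgroup.closure ({a, b} : Set M.Group) :=
        Subgroup.subset_closure (by simp)
      have hmb : b ∈ Subgroup.closure ({a, b} : Set M.Group) :=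
        Subgroup.subset_closure (by simp)
      exact mul_mem (zpow_mem hma _) (zpow_mem hmb _)
    · rw [Subgroup.closure_le]
      rintro x (rfl | rfl)
      · exact ⟨Multiplicative.ofAdd (1, 0), by rw [hψ_apply]; simp⟩
      · exact ⟨Multiplicative.ofAdd (0, 1), by rw [hψ_apply]; simp⟩
  refine ⟨hab, hafin, hbfin, ?_⟩
  exact ⟨(MulEquiv.subgroupCongr hrange.symm).trans (MonoidHom.ofInjective hψinj).symm⟩
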